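/- arXiv:1311.2240 — 11 statements merged into one kernel-verified Lean document; each statement's English description precedes it below -/
import Mathlib

section
/- Let F : ℝ³ → ℝ and φ, ψ : ℝ² → ℝ satisfy φ(y, F(x,y,z)) = ψ(x,z) for all x,y,z ∈ ℝ, and let Ω, Υ : ℝ² → ℝ be a left inverse of (φ, ψ). If u is a solution of the quad-graph equation and v : ℤ × ℤ → ℝ is defined by v(i,j) := φ(u(i,j), u(i,j+1)), then for all i,j ∈ ℤ: (a) v(i+1,j) = ψ(u(i,j), u(i,j+1)); (b) u(i,j) = Ω(v(i,j), v(i+1,j)) and u(i,j+1) = Υ(v(i,j), v(i+1,j)); (c) v is a solution of the transformed equation (pqd), i.e. Ω(v(i,j+1), v(i+1,j+1)) = Υ(v(i,j), v(i+1,j)). -/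
/-- The non-point transformation `v(i,j) = φ(u(i,j), u(i,j+1))` maps
solutions of the quad-graph equation of form (invt) into solutions of the
transformed equation (pqd), with the stated intermediate identities. -/
theorem transformation_maps_solutions
    (F : ℝ → ℝ → ℝ → ℝ) (φ ψ Ω Υ : ℝ → ℝ → ℝ)
    (hinvt : ∀ x y z : ℝ, φ y (F x y z) = ψ x z)
    (hΩ : ∀ w z : ℝ, Ω (φ w z) (ψ w z) = w)
    (hΥ : ∀ w z : ℝ, Υ (φ w z) (ψ w z) = z)
    (u : ℤ → ℤ → ℝ)
    (hu : ∀ i j : ℤ, u (i+1) (j+1) = F (u i j) (u (i+1) j) (u i (j+1)))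
    (v : ℤ → ℤ → ℝ)
    (hv : ∀ i j : ℤ, v i j = φ (u i j) (u i (j+1))) :
    ∀ i j : ℤ,
      v (i+1) j = ψ (u i j) (u i (j+1)) ∧
      u i j = Ω (v i j) (v (i+1) j) ∧
      u i (j+1) = Υ (v i j) (v (i+1) j) ∧
      Ω (v i (j+1)) (v (i+1) (j+1)) = Υ (v i j) (v (i+1) j) := by
  have ha : ∀ i j : ℤ, v (i+1) j = ψ (u i j) (u i (j+1)) := by
    intro i j
    rw [hv, hu, hinvt]
  intro i j
  refine ⟨ha i j, ?_, ?_, ?_⟩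
  · rw [hv, ha, hΩ]
  · rw [hv, ha, hΥ]
  · rw [hv i (j+1), ha i (j+1), hΩ, hv i j, ha i j, hΥ]
end

section
/- Let F : ℝ³ → ℝ and φ, ψ : ℝ² → ℝ satisfy φ(y, F(x,y,z)) = ψ(x,z) for all x,y,z ∈ ℝ; let Ω, Υ : ℝ² → ℝ be a two-sided inverse of (φ, ψ), and suppose that for every y ∈ ℝ the map z ↦ φ(y,z) is injective. If V : ℤ × ℤ → ℝ is a solution of the transformed equation (pqd), then the function u : ℤ × ℤ → ℝ defined by u(i,j) := Ω(V(i,j), V(i+1,j)) is a solution of the quad-graph equation u(i+1,j+1) = F(u(i,j), u(i+1,j), u(i,j+1)), and moreover V(i,j) = φ(u(i,j), u(i,j+1)) and V(i+1,j) = ψ(u(i,j), u(i,j+1)) for all i,j ∈ ℤ. -/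
/-- The inverse of the non-point transformation: from a solution `V`
of the transformed equation (pqd), the function `u(i,j) = Ω(V(i,j), V(i+1,j))`
is a solution of the quad-graph equation, and `V` is recovered from `u` via `φ`, `ψ`. -/
theorem inverse_transformation_maps_solutions
    (F : ℝ → ℝ → ℝ → ℝ) (φ ψ Ω Υ : ℝ → ℝ → ℝ)
    (hinvt : ∀ x y z : ℝ, φ y (F x y z) = ψ x z)
    (hΩ : ∀ w z : ℝ, Ω (φ w z) (ψ w z) = w)
    (hΥ : ∀ w z : ℝ, Υ (φ w z) (ψ w z) = z)
    (hφ : ∀ a b : ℝ, φ (Ω a b) (Υ a b) = a)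
    (hψ : ∀ a b : ℝ, ψ (Ω a b) (Υ a b) = b)
    (hφinj : ∀ y : ℝ, Function.Injective (fun z => φ y z))
    (V : ℤ → ℤ → ℝ)
    (hV : ∀ i j : ℤ, Ω (V i (j+1)) (V (i+1) (j+1)) = Υ (V i j) (V (i+1) j))
    (u : ℤ → ℤ → ℝ)
    (hu : ∀ i j : ℤ, u i j = Ω (V i j) (V (i+1) j)) :
    (∀ i j : ℤ, u (i+1) (j+1) = F (u i j) (u (i+1) j) (u i (j+1))) ∧
    (∀ i j : ℤ, V i j = φ (u i j) (u i (j+1)) ∧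
      V (i+1) j = ψ (u i j) (u i (j+1))) := by
  have hup : ∀ i j : ℤ, u i (j+1) = Υ (V i j) (V (i+1) j) := by
    intro i j; rw [hu, hV]
  have h2 : ∀ i j : ℤ, V i j = φ (u i j) (u i (j+1)) ∧
      V (i+1) j = ψ (u i j) (u i (j+1)) := by
    intro i j
    rw [hu, hup]
    exact ⟨(hφ _ _).symm, (hψ _ _).symm⟩
  refine ⟨fun i j => ?_, h2⟩
  apply hφinj (u (i+1) j)
  show φ (u (i+1) j) (u (i+1) (j+1)) = φ (u (i+1) j) (F (u i j) (u (i+1) j) (u i (j+1)))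
  rw [hinvt, ← (h2 (i+1) j).1, (h2 i j).2]
end

section
/- (Theorem 1, i-integral direction.) Let F : ℝ³ → ℝ and φ, ψ : ℝ² → ℝ satisfy φ(y, F(x,y,z)) = ψ(x,z) for all x,y,z ∈ ℝ; let Ω, Υ : ℝ² → ℝ be a two-sided inverse of (φ, ψ), and suppose that for every y ∈ ℝ the map z ↦ φ(y,z) is injective. If I : ℝ^{m+1} → ℝ is an i-integral of the quad-graph equation (its value along m+1 consecutive horizontal points is unchanged by the unit shift in j, for every solution), then the function Î : ℝ^{m+2} → ℝ defined by Î(v_0, v_1, …, v_{m+1}) := I(Ω(v_0,v_1), Ω(v_1,v_2), …, Ω(v_m,v_{m+1})) is an i-integral of the transformed equation (pqd): for every solution V of (pqd) and all i,j ∈ ℤ, Î(V(i,j+1), …, V(i+m+1,j+1)) = Î(V(i,j), …, V(i+m+1,j)). Moreover, if I and Ω are differentiable, the partial derivatives of I with respect to its first and last arguments never vanish, and both partial derivatives of Ω never vanish, then the partial derivatives of Î with respect to its first and last arguments never vanish (so Î has order m+1). -/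
private lemma diff_update {n : ℕ} (x : Fin n → ℝ) (i : Fin n)
    {I : (Fin n → ℝ) → ℝ} (hI : Differentiable ℝ I) :
    Differentiable ℝ (fun s : ℝ => I (Function.update x i s)) := by
  apply hI.comp
  rw [differentiable_pi]
  intro k
  by_cases hk : k = i
  · subst hk
    simp only [Function.update_apply, if_pos rfl]
    exact differentiable_id
  · simp only [Function.update_apply, if_neg hk]
    exact differentiable_const _



/-- Theorem 1, i-integral direction: if `I` is an `i`-integral of
order `m` of the quad-graph equation, then
`Î(v_0,…,v_{m+1}) = I(Ω(v_0,v_1),…,Ω(v_m,v_{m+1}))` is an `i`-integral of the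
transformed equation (pqd); moreover under the differentiability and
nondegeneracy assumptions on `I` and `Ω`, the first and last partial derivatives
of `Î` never vanish, so `Î` has order `m+1`. -/
theorem i_integral_transforms
    (m : ℕ) (F : ℝ → ℝ → ℝ → ℝ) (φ ψ Ω Υ : ℝ → ℝ → ℝ)
    (hinvt : ∀ x y z : ℝ, φ y (F x y z) = ψ x z)
    (hΩ : ∀ w z : ℝ, Ω (φ w z) (ψ w z) = w)
    (hΥ : ∀ w z : ℝ, Υ (φ w z) (ψ w z) = z)
    (hφ : ∀ a b : ℝ, φ (Ω a b) (Υ a b) = a)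
    (hψ : ∀ a b : ℝ, ψ (Ω a b) (Υ a b) = b)
    (hφinj : ∀ y : ℝ, Function.Injective (fun z => φ y z))
    (I : (Fin (m+1) → ℝ) → ℝ)
    (hI : ∀ u : ℤ → ℤ → ℝ,
      (∀ i j : ℤ, u (i+1) (j+1) = F (u i j) (u (i+1) j) (u i (j+1))) →
      ∀ i j : ℤ,
        I (fun k => u (i + ((k : ℕ) : ℤ)) (j+1)) =
        I (fun k => u (i + ((k : ℕ) : ℤ)) j))
    (Ihat : (Fin (m+2) → ℝ) → ℝ)
    (hIhat : ∀ v : Fin (m+2) → ℝ,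
      Ihat v = I (fun k => Ω (v k.castSucc) (v k.succ))) :
    (∀ V : ℤ → ℤ → ℝ,
      (∀ i j : ℤ, Ω (V i (j+1)) (V (i+1) (j+1)) = Υ (V i j) (V (i+1) j)) →
      ∀ i j : ℤ,
        Ihat (fun k => V (i + ((k : ℕ) : ℤ)) (j+1)) =
        Ihat (fun k => V (i + ((k : ℕ) : ℤ)) j)) ∧
    ((Differentiable ℝ I ∧
      Differentiable ℝ (fun p : ℝ × ℝ => Ω p.1 p.2) ∧
      (∀ x : Fin (m+1) → ℝ,
        deriv (fun t => I (Function.update x 0 t)) (x 0) ≠ 0) ∧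
      (∀ x : Fin (m+1) → ℝ,
        deriv (fun t => I (Function.update x (Fin.last m) t)) (x (Fin.last m)) ≠ 0) ∧
      (∀ a b : ℝ, deriv (fun t => Ω t b) a ≠ 0) ∧
      (∀ a b : ℝ, deriv (fun t => Ω a t) b ≠ 0)) →
      ∀ v : Fin (m+2) → ℝ,
        deriv (fun t => Ihat (Function.update v 0 t)) (v 0) ≠ 0 ∧
        deriv (fun t => Ihat (Function.update v (Fin.last (m+1)) t))
          (v (Fin.last (m+1))) ≠ 0) := by
  constructor
  · intro V hV i j
    set u : ℤ → ℤ → ℝ := fun a b => Ω (V a b) (V (a+1) b) with hu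
    have key : ∀ a b : ℤ, φ (u a b) (u a (b+1)) = V a b := by
      intro a b
      have h1 : u a (b+1) = Υ (V a b) (V (a+1) b) := hV a b
      rw [h1]
      exact hφ _ _
    have key2 : ∀ a b : ℤ, ψ (u a b) (u a (b+1)) = V (a+1) b := by
      intro a b
      have h1 : u a (b+1) = Υ (V a b) (V (a+1) b) := hV a b
      rw [h1]
      exact hψ _ _
    have hsol : ∀ a b : ℤ, u (a+1) (b+1) = F (u a b) (u (a+1) b) (u a (b+1)) := by
      intro a b
      apply hφinj (u (a+1) b)
      show φ (u (a+1) b) (u (a+1) (b+1)) = φ (u (a+1) b) (F (u a b) (u (a+1) b) (u a (b+1)))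
      rw [hinvt, key (a+1) b, key2 a b]
    have harg : ∀ b : ℤ, (fun k : Fin (m+1) =>
        Ω ((fun k : Fin (m+2) => V (i + ((k:ℕ):ℤ)) b) k.castSucc)
          ((fun k : Fin (m+2) => V (i + ((k:ℕ):ℤ)) b) k.succ)) =
        (fun k : Fin (m+1) => u (i + ((k:ℕ):ℤ)) b) := by
      intro b
      funext k
      simp only [hu, Fin.coe_castSucc, Fin.val_succ]
      have : ((((k:ℕ) + 1 : ℕ)) : ℤ) = ((k:ℕ):ℤ) + 1 := by push_cast; ring
      rw [this, add_assoc]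
    rw [hIhat, hIhat, harg, harg]
    exact hI u hsol i j
  · rintro ⟨hIdiff, hΩdiff, hI0, hIlast, hΩ1, hΩ2⟩ v
    set x : Fin (m+1) → ℝ := fun k => Ω (v k.castSucc) (v k.succ) with hx
    have hΩld : ∀ b : ℝ, Differentiable ℝ (fun t : ℝ => Ω t b) := by
      intro b
      exact hΩdiff.comp (differentiable_id.prodMk (differentiable_const b))
    have hΩrd : ∀ a : ℝ, Differentiable ℝ (fun t : ℝ => Ω a t) := by
      intro a
      exact hΩdiff.comp ((differentiable_const a).prodMk differentiable_id)
    constructor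
    · have heq : (fun t => Ihat (Function.update v 0 t)) =
          (fun s => I (Function.update x 0 s)) ∘ (fun t => Ω t (v 1)) := by
        funext t
        rw [hIhat]
        simp only [Function.comp]
        congr 1
        funext k
        by_cases hk : k = 0
        · subst hk
          simp [Function.update_apply, Fin.succ_ne_zero]
        · have h1 : k.castSucc ≠ 0 := by
            simpa [Fin.castSucc_eq_zero_iff] using hk
          have h2 : k.succ ≠ 0 := Fin.succ_ne_zero k
          simp [Function.update_apply, h1, h2, hk, hx]
      rw [heq, deriv_comp (h₂ := fun s => I (Function.update x 0 s))
        (h := fun t => Ω t (v 1)) (v 0)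
        ((diff_update x 0 hIdiff) (Ω (v 0) (v 1))) ((hΩld (v 1)) (v 0))]
      have hx0 : Ω (v 0) (v 1) = x 0 := by
        simp [hx]
      rw [hx0]
      exact mul_ne_zero (hI0 x) (hΩ1 (v 0) (v 1))
    · have heq : (fun t => Ihat (Function.update v (Fin.last (m+1)) t)) =
          (fun s => I (Function.update x (Fin.last m) s)) ∘
            (fun t => Ω (v (Fin.last m).castSucc) t) := by
        funext t
        rw [hIhat]
        simp only [Function.comp]
        congr 1
        funext k
        by_cases hk : k = Fin.last m
        · subst hk
          have h1 : (Fin.last m).castSucc ≠ Fin.last (m+1) :=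
            ne_of_lt (Fin.castSucc_lt_last _)
          have h2 : (Fin.last m).succ = Fin.last (m+1) := Fin.succ_last m
          simp [Function.update_apply, h1, h2]
        · have h1 : k.castSucc ≠ Fin.last (m+1) := ne_of_lt (Fin.castSucc_lt_last _)
          have h2 : k.succ ≠ Fin.last (m+1) := by
            rw [← Fin.succ_last]
            exact fun h => hk (Fin.succ_injective _ h)
          simp [Function.update_apply, h1, h2, hk, hx]
      rw [heq, deriv_comp (h₂ := fun s => I (Function.update x (Fin.last m) s))
        (h := fun t => Ω (v (Fin.last m).castSucc) t) _
        ((diff_update x (Fin.last m) hIdiff) (Ω (v (Fin.last m).castSucc) (v (Fin.last (m+1)))))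
        ((hΩrd (v (Fin.last m).castSucc)) (v (Fin.last (m+1))))]
      have hxl : Ω (v (Fin.last m).castSucc) (v (Fin.last (m+1))) = x (Fin.last m) := by
        simp [hx, Fin.succ_last]
      rw [hxl]
      exact mul_ne_zero (hIlast x) (hΩ2 (v (Fin.last m).castSucc) (v (Fin.last (m+1))))
end

section
/- (Theorem 1, converse for i-integrals.) Let F : ℝ³ → ℝ and φ, ψ : ℝ² → ℝ satisfy φ(y, F(x,y,z)) = ψ(x,z) for all x,y,z ∈ ℝ, and let Ω, Υ : ℝ² → ℝ be a left inverse of (φ, ψ). Let I : ℝ^{m+1} → ℝ and define Î : ℝ^{m+2} → ℝ by Î(v_0, …, v_{m+1}) := I(Ω(v_0,v_1), …, Ω(v_m,v_{m+1})). If Î is an i-integral of the transformed equation (pqd) (for every solution V of (pqd) and all i,j: Î(V(i,j+1), …, V(i+m+1,j+1)) = Î(V(i,j), …, V(i+m+1,j))), then I is an i-integral of the quad-graph equation: for every solution u and all i,j ∈ ℤ, I(u(i,j+1), …, u(i+m,j+1)) = I(u(i,j), …, u(i+m,j)). -/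
/-- Theorem 1, converse for i-integrals: if
`Î(v_0,…,v_{m+1}) = I(Ω(v_0,v_1),…,Ω(v_m,v_{m+1}))` is an `i`-integral of the
transformed equation (pqd), then `I` is an `i`-integral of the quad-graph
equation. -/
theorem i_integral_transforms_back
    (m : ℕ) (F : ℝ → ℝ → ℝ → ℝ) (φ ψ Ω Υ : ℝ → ℝ → ℝ)
    (hinvt : ∀ x y z : ℝ, φ y (F x y z) = ψ x z)
    (hΩ : ∀ w z : ℝ, Ω (φ w z) (ψ w z) = w)
    (hΥ : ∀ w z : ℝ, Υ (φ w z) (ψ w z) = z)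
    (I : (Fin (m+1) → ℝ) → ℝ)
    (Ihat : (Fin (m+2) → ℝ) → ℝ)
    (hIhat : ∀ v : Fin (m+2) → ℝ,
      Ihat v = I (fun k => Ω (v k.castSucc) (v k.succ)))
    (hint : ∀ V : ℤ → ℤ → ℝ,
      (∀ i j : ℤ, Ω (V i (j+1)) (V (i+1) (j+1)) = Υ (V i j) (V (i+1) j)) →
      ∀ i j : ℤ,
        Ihat (fun k => V (i + ((k : ℕ) : ℤ)) (j+1)) =
        Ihat (fun k => V (i + ((k : ℕ) : ℤ)) j)) :
    ∀ u : ℤ → ℤ → ℝ,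
      (∀ i j : ℤ, u (i+1) (j+1) = F (u i j) (u (i+1) j) (u i (j+1))) →
      ∀ i j : ℤ,
        I (fun k => u (i + ((k : ℕ) : ℤ)) (j+1)) =
        I (fun k => u (i + ((k : ℕ) : ℤ)) j) := by
  intro u hu i j
  set V : ℤ → ℤ → ℝ := fun a b => φ (u a b) (u a (b+1)) with hV
  have hpsi : ∀ a b : ℤ, V (a+1) b = ψ (u a b) (u a (b+1)) := by
    intro a b
    simp only [hV]
    rw [hu a b, hinvt]
  have keyΩ : ∀ a b : ℤ, Ω (V a b) (V (a+1) b) = u a b := by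
    intro a b; rw [hpsi]; exact hΩ _ _
  have keyΥ : ∀ a b : ℤ, Υ (V a b) (V (a+1) b) = u a (b+1) := by
    intro a b; rw [hpsi]; exact hΥ _ _
  have hpqd : ∀ a b : ℤ, Ω (V a (b+1)) (V (a+1) (b+1)) = Υ (V a b) (V (a+1) b) := by
    intro a b; rw [keyΩ, keyΥ]
  have h := hint V hpqd i j
  rw [hIhat, hIhat] at h
  have e : ∀ b : ℤ,
      (fun k : Fin (m+1) => Ω (V (i + ((k.castSucc : ℕ) : ℤ)) b)
        (V (i + ((k.succ : ℕ) : ℤ)) b)) =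
      (fun k : Fin (m+1) => u (i + ((k : ℕ) : ℤ)) b) := by
    intro b
    funext k
    have : i + ((k.succ : ℕ) : ℤ) = i + ((k : ℕ) : ℤ) + 1 := by
      simp [Fin.val_succ]; ring
    rw [Fin.coe_castSucc, this, keyΩ]
  rw [e, e] at h
  exact h
end

section
/- (Theorem 1, converse for j-integrals.) Let F : ℝ³ → ℝ and φ, ψ : ℝ² → ℝ satisfy φ(y, F(x,y,z)) = ψ(x,z) for all x,y,z ∈ ℝ, and let Ω, Υ : ℝ² → ℝ be a left inverse of (φ, ψ). If Φ : ℝⁿ → ℝ is a j-integral of the transformed equation (pqd) (for every solution V of (pqd) and all i,j: Φ(V(i+1,j), …, V(i+1,j+n−1)) = Φ(V(i,j), …, V(i,j+n−1))), then the function J : ℝ^{n+1} → ℝ defined by J(x_0, …, x_n) := Φ(φ(x_0,x_1), φ(x_1,x_2), …, φ(x_{n-1},x_n)) is a j-integral of the quad-graph equation: for every solution u and all i,j ∈ ℤ, J(u(i+1,j), …, u(i+1,j+n)) = J(u(i,j), …, u(i,j+n)). -/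
/-- Theorem 1, converse for j-integrals: if `Φ` is a `j`-integral
of the transformed equation (pqd), then
`J(x_0,…,x_n) = Φ(φ(x_0,x_1),…,φ(x_{n-1},x_n))` is a `j`-integral of the
quad-graph equation. -/
theorem j_integral_transforms_back
    (n : ℕ) (F : ℝ → ℝ → ℝ → ℝ) (φ ψ Ω Υ : ℝ → ℝ → ℝ)
    (hinvt : ∀ x y z : ℝ, φ y (F x y z) = ψ x z)
    (hΩ : ∀ w z : ℝ, Ω (φ w z) (ψ w z) = w)
    (hΥ : ∀ w z : ℝ, Υ (φ w z) (ψ w z) = z)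
    (Φ : (Fin n → ℝ) → ℝ)
    (hΦ : ∀ V : ℤ → ℤ → ℝ,
      (∀ i j : ℤ, Ω (V i (j+1)) (V (i+1) (j+1)) = Υ (V i j) (V (i+1) j)) →
      ∀ i j : ℤ,
        Φ (fun k => V (i+1) (j + ((k : ℕ) : ℤ))) =
        Φ (fun k => V i (j + ((k : ℕ) : ℤ)))) :
    ∀ u : ℤ → ℤ → ℝ,
      (∀ i j : ℤ, u (i+1) (j+1) = F (u i j) (u (i+1) j) (u i (j+1))) →
      ∀ i j : ℤ,
        Φ (fun k => φ (u (i+1) (j + ((k : ℕ) : ℤ))) (u (i+1) (j + ((k : ℕ) : ℤ) + 1))) =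
        Φ (fun k => φ (u i (j + ((k : ℕ) : ℤ))) (u i (j + ((k : ℕ) : ℤ) + 1))) := by
  intro u hu i j
  have key : ∀ i j : ℤ, φ (u (i+1) j) (u (i+1) (j+1)) = ψ (u i j) (u i (j+1)) := by
    intro i j
    rw [hu i j, hinvt]
  exact hΦ (fun i j => φ (u i j) (u i (j+1)))
    (by
      intro i j
      show Ω (φ (u i (j+1)) (u i (j+1+1))) (φ (u (i+1) (j+1)) (u (i+1) (j+1+1))) = Υ (φ (u i j) (u i (j+1))) (φ (u (i+1) j) (u (i+1) (j+1)))
      rw [key i (j+1), key i j, hΩ, hΥ]) i j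
end

section
/- (Lemma 2.) Let F : ℝ³ → ℝ, φ, ψ, g : ℝ² → ℝ satisfy, for all x,y,z,w ∈ ℝ: φ(y, F(x,y,z)) = ψ(x,z), F(x,y,z) = g(ψ(x,z), y), and g(φ(y,w), y) = w. Assume the richness property: for every (a, b, c_1, …, c_n) ∈ ℝ^{n+2} there exists a solution u of the quad-graph equation with u(0,0) = a, u(1,0) = b, and u(0,l) = c_l for l = 1, …, n. If J : ℝ^{n+1} → ℝ is a j-integral of the quad-graph equation, then there exists Φ : ℝⁿ → ℝ such that J(x_0, x_1, …, x_n) = Φ(φ(x_0,x_1), φ(x_1,x_2), …, φ(x_{n-1},x_n)) for all (x_0, …, x_n) ∈ ℝ^{n+1}. -/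
/-- chain built by `g` from initial value `0` and parameters `s`. -/
private def chJ (g : ℝ → ℝ → ℝ) (s : ℕ → ℝ) : ℕ → ℝ
  | 0 => 0
  | k+1 => g (s k) (chJ g s k)



/-- Lemma 2: under the structural assumptions on `F`, `φ`, `ψ`, `g`
and the richness of the solution set, every `j`-integral
`J : ℝ^{n+1} → ℝ` of the quad-graph equation can be written as a function `Φ` of
`(φ(x_0,x_1), φ(x_1,x_2), …, φ(x_{n-1},x_n))`. -/
theorem j_integral_representation
    (n : ℕ) (F : ℝ → ℝ → ℝ → ℝ) (φ ψ g : ℝ → ℝ → ℝ)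
    (hinvt : ∀ x y z : ℝ, φ y (F x y z) = ψ x z)
    (hFg : ∀ x y z : ℝ, F x y z = g (ψ x z) y)
    (hg : ∀ y w : ℝ, g (φ y w) y = w)
    (hrich : ∀ (a b : ℝ) (c : Fin n → ℝ),
      ∃ u : ℤ → ℤ → ℝ,
        (∀ i j : ℤ, u (i+1) (j+1) = F (u i j) (u (i+1) j) (u i (j+1))) ∧
        u 0 0 = a ∧ u 1 0 = b ∧
        ∀ l : Fin n, u 0 (((l : ℕ) : ℤ) + 1) = c l)
    (J : (Fin (n+1) → ℝ) → ℝ)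
    (hJ : ∀ u : ℤ → ℤ → ℝ,
      (∀ i j : ℤ, u (i+1) (j+1) = F (u i j) (u (i+1) j) (u i (j+1))) →
      ∀ i j : ℤ,
        J (fun l => u (i+1) (j + ((l : ℕ) : ℤ))) =
        J (fun l => u i (j + ((l : ℕ) : ℤ)))) :
    ∃ Φ : (Fin n → ℝ) → ℝ,
      ∀ x : Fin (n+1) → ℝ,
        J x = Φ (fun k : Fin n => φ (x k.castSucc) (x k.succ)) := by
  classical
  refine ⟨fun v => J (fun l : Fin (n+1) =>
      chJ g (fun k => if h : k < n then v ⟨k, h⟩ else 0) (l : ℕ)), ?_⟩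
  intro x
  set V : ℕ → ℝ := fun k =>
    if h : k < n then φ (x (⟨k, h⟩ : Fin n).castSucc) (x (⟨k, h⟩ : Fin n).succ) else 0 with hVdef
  show J x = J (fun l : Fin (n+1) => chJ g V (l : ℕ))
  -- first solution: row 0 = x
  obtain ⟨u, hu, hu00, -, hu0l⟩ := hrich (x 0) 0 (fun k => x k.succ)
  have A1 : ∀ l : Fin (n+1), u 0 ((l : ℕ) : ℤ) = x l := by
    intro ⟨m, hm⟩
    cases m with
    | zero => simpa using hu00
    | succ k =>
      have hk : k < n := Nat.lt_of_succ_lt_succ hm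
      have h := hu0l ⟨k, hk⟩
      have hs : (⟨k, hk⟩ : Fin n).succ = (⟨k+1, hm⟩ : Fin (n+1)) := rfl
      rw [hs] at h
      rw [← h]
      push_cast
      ring_nf
  -- ψ along row -1 equals φ along row 0
  have hzψ : ∀ k : ℕ, k < n → ψ (u (-1) (k : ℤ)) (u (-1) ((k : ℤ) + 1)) = V k := by
    intro k hk
    have h1 := hu (-1) (k : ℤ)
    simp only [neg_add_cancel] at h1
    have h2 := hinvt (u (-1) (k : ℤ)) (u 0 (k : ℤ)) (u (-1) ((k : ℤ) + 1))
    rw [← h1] at h2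
    have e1 : u 0 ((k : ℕ) : ℤ) = x ⟨k, by omega⟩ := A1 ⟨k, by omega⟩
    have e2 : u 0 ((k : ℤ) + 1) = x ⟨k+1, by omega⟩ := by
      have h3 := A1 ⟨k+1, by omega⟩
      rw [← h3]; push_cast; ring_nf
    rw [e1, e2] at h2
    rw [← h2, hVdef]
    simp only [hk, dif_pos]
    rfl
  -- J x = J (row -1)
  have hJx : J x = J (fun l : Fin (n+1) => u (-1) ((l : ℕ) : ℤ)) := by
    have h := hJ u hu (-1) 0
    simp only [neg_add_cancel, zero_add] at h
    rw [funext A1] at h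
    exact h
  -- second solution: row 0 = (row -1 of u), and w 1 0 = 0
  obtain ⟨w, hw, hw00, hw10, hw0l⟩ :=
    hrich (u (-1) 0) 0 (fun k : Fin n => u (-1) (((k : ℕ) : ℤ) + 1))
  have C1 : ∀ k : ℕ, k ≤ n → w 0 (k : ℤ) = u (-1) (k : ℤ) := by
    intro k hkn
    cases k with
    | zero => simpa using hw00
    | succ k =>
      have h := hw0l ⟨k, by omega⟩
      push_cast at h ⊢
      exact h
  have C2 : ∀ k : ℕ, k ≤ n → w 1 (k : ℤ) = chJ g V k := by
    intro k
    induction k with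
    | zero => intro _; simpa [chJ] using hw10
    | succ k ih =>
      intro hk1
      have hk : k < n := by omega
      have h := hw 0 (k : ℤ)
      simp only [zero_add] at h
      have e1 : w 0 ((k : ℕ) : ℤ) = u (-1) ((k : ℕ) : ℤ) := C1 k (by omega)
      have e2 : w 0 ((k : ℤ) + 1) = u (-1) ((k : ℤ) + 1) := by
        have h3 := C1 (k+1) (by omega)
        push_cast at h3
        exact h3
      rw [e1, e2, ih (by omega)] at h
      rw [hFg] at h
      rw [hzψ k hk] at h
      have : ((k+1 : ℕ) : ℤ) = (k : ℤ) + 1 := by push_cast; ring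
      rw [this]
      rw [h]
      rfl
  -- conclude
  have h := hJ w hw 0 0
  simp only [zero_add] at h
  have eL : (fun l : Fin (n+1) => w 1 ((l : ℕ) : ℤ)) =
      (fun l : Fin (n+1) => chJ g V (l : ℕ)) := by
    funext l
    have := C2 (l : ℕ) (by omega)
    simpa using this
  have eR : (fun l : Fin (n+1) => w 0 ((l : ℕ) : ℤ)) =
      (fun l : Fin (n+1) => u (-1) ((l : ℕ) : ℤ)) := by
    funext l
    exact C1 (l : ℕ) (by omega)
  rw [eL, eR] at h
  rw [hJx, ← h]
end

section
/- (i-integral of the discrete Liouville equation.) Let u : ℤ × ℤ → ℝ satisfy u(i+1,j+1) · u(i,j) = (u(i+1,j) − 1)(u(i,j+1) − 1) for all i,j ∈ ℤ, and assume u(i,j) ≠ 0 and u(i,j) ≠ 1 for all i,j. Then the function I(i,j) := (u(i+2,j)/(u(i+1,j) − 1) + 1) · ((u(i,j) − 1)/u(i+1,j) + 1) satisfies I(i,j+1) = I(i,j) for all i,j ∈ ℤ. -/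
/-- the function
`I = (u_{2,0}/(u_{1,0}-1) + 1)((u-1)/u_{1,0} + 1)` is an `i`-integral of the
discrete Liouville equation `u_{1,1} u = (u_{1,0}-1)(u_{0,1}-1)`. -/
theorem discrete_liouville_i_integral
    (u : ℤ → ℤ → ℝ)
    (hu : ∀ i j : ℤ, u (i+1) (j+1) * u i j = (u (i+1) j - 1) * (u i (j+1) - 1))
    (h0 : ∀ i j : ℤ, u i j ≠ 0)
    (h1 : ∀ i j : ℤ, u i j ≠ 1) :
    ∀ i j : ℤ,
      (u (i+2) (j+1) / (u (i+1) (j+1) - 1) + 1) *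
        ((u i (j+1) - 1) / u (i+1) (j+1) + 1) =
      (u (i+2) j / (u (i+1) j - 1) + 1) *
        ((u i j - 1) / u (i+1) j + 1) := by
  intro i j
  have h2 : i + 1 + 1 = i + 2 := by ring
  have hA := hu i j
  have hB := hu (i+1) j
  rw [h2] at hB
  have hb0 := h0 (i+1) j
  have hb1 := sub_ne_zero_of_ne (h1 (i+1) j)
  have hB0 := h0 (i+1) (j+1)
  have hB1 := sub_ne_zero_of_ne (h1 (i+1) (j+1))
  field_simp
  linear_combination ((u i (j+1) - 1 + u (i+1) (j+1)) * (u (i+1) j - 1)) * hB -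
    ((u (i+1) (j+1) - 1) * (u (i+2) j + u (i+1) j - 1)) * hA
end

section
/- (j-integral of the discrete Liouville equation.) Let u : ℤ × ℤ → ℝ satisfy u(i+1,j+1) · u(i,j) = (u(i+1,j) − 1)(u(i,j+1) − 1) for all i,j ∈ ℤ, and assume u(i,j) ≠ 0 and u(i,j) ≠ 1 for all i,j. Then the function J(i,j) := (u(i,j+2)/(u(i,j+1) − 1) + 1) · ((u(i,j) − 1)/u(i,j+1) + 1) satisfies J(i+1,j) = J(i,j) for all i,j ∈ ℤ. -/
/-- the function
`J = (u_{0,2}/(u_{0,1}-1) + 1)((u-1)/u_{0,1} + 1)` is a `j`-integral of the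
discrete Liouville equation `u_{1,1} u = (u_{1,0}-1)(u_{0,1}-1)`. -/
theorem discrete_liouville_j_integral
    (u : ℤ → ℤ → ℝ)
    (hu : ∀ i j : ℤ, u (i+1) (j+1) * u i j = (u (i+1) j - 1) * (u i (j+1) - 1))
    (h0 : ∀ i j : ℤ, u i j ≠ 0)
    (h1 : ∀ i j : ℤ, u i j ≠ 1) :
    ∀ i j : ℤ,
      (u (i+1) (j+2) / (u (i+1) (j+1) - 1) + 1) *
        ((u (i+1) j - 1) / u (i+1) (j+1) + 1) =
      (u i (j+2) / (u i (j+1) - 1) + 1) *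
        ((u i j - 1) / u i (j+1) + 1) := by
  intro i j
  have hq := hu i j
  have hr := hu i (j+1)
  rw [show j+1+1 = j+2 from by ring] at hr
  have hb := h0 i (j+1)
  have hb1 : u i (j+1) - 1 ≠ 0 := sub_ne_zero.mpr (h1 i (j+1))
  have hQ := h0 (i+1) (j+1)
  have hQ1 : u (i+1) (j+1) - 1 ≠ 0 := sub_ne_zero.mpr (h1 (i+1) (j+1))
  have e1 : u (i+1) (j+2) / (u (i+1) (j+1) - 1) = (u i (j+2) - 1) / u i (j+1) := by
    rw [div_eq_div_iff hQ1 hb]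
    linear_combination hr
  have e2 : (u (i+1) j - 1) / u (i+1) (j+1) = u i j / (u i (j+1) - 1) := by
    rw [div_eq_div_iff hQ hb1]
    linear_combination -hq
  rw [e1, e2]
  field_simp
  ring
end

section
/- (The function (phi) is a first-order j-integral of equation (strt).) Let A, B, C, D, δ ∈ ℝ and let v : ℤ × ℤ → ℝ be such that for all i,j ∈ ℤ, writing a = v(i,j), b = v(i+1,j), c = v(i,j+1), d = v(i+1,j+1): b ≠ a, d ≠ c, Ac + δa + C ≠ 0, Ad + δb + C ≠ 0, and (δD − d(Ac + C − δB))/(d − c) = ((a + B)(δb + C) − AD)/(b − a). Then (d(b + B) + D)/(Ad + δb + C) = (c(a + B) + D)/(Ac + δa + C) for all i,j ∈ ℤ; that is, φ(v, v_{0,1}) := (v_{0,1}(v + B) + D)/(A v_{0,1} + δ v + C) is unchanged under the unit shift in i along every solution of (strt). -/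
/-- the function
`φ(v, v_{0,1}) = (v_{0,1}(v + B) + D)/(A v_{0,1} + δ v + C)` is a first-order
`j`-integral of equation (strt), i.e. it is unchanged under the unit shift in `i`
along every solution. -/
theorem phi_is_j_integral_of_strt
    (A B C D δ : ℝ) (v : ℤ → ℤ → ℝ)
    (h : ∀ i j : ℤ,
      v (i+1) j ≠ v i j ∧
      v (i+1) (j+1) ≠ v i (j+1) ∧
      A * v i (j+1) + δ * v i j + C ≠ 0 ∧
      A * v (i+1) (j+1) + δ * v (i+1) j + C ≠ 0 ∧
      (δ * D - v (i+1) (j+1) * (A * v i (j+1) + C - δ * B)) /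
          (v (i+1) (j+1) - v i (j+1)) =
        ((v i j + B) * (δ * v (i+1) j + C) - A * D) / (v (i+1) j - v i j)) :
    ∀ i j : ℤ,
      (v (i+1) (j+1) * (v (i+1) j + B) + D) /
          (A * v (i+1) (j+1) + δ * v (i+1) j + C) =
        (v i (j+1) * (v i j + B) + D) / (A * v i (j+1) + δ * v i j + C) := by
  intro i j
  obtain ⟨h1, h2, h3, h4, h5⟩ := h i j
  set a := v i j
  set b := v (i+1) j
  set c := v i (j+1)
  set d := v (i+1) (j+1)
  rw [div_eq_div_iff (sub_ne_zero.mpr h2) (sub_ne_zero.mpr h1)] at h5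
  rw [div_eq_div_iff h4 h3]
  linear_combination -h5
end

section
/- (Cross-ratio i-integral of equations of the form (veq).) Let α, β, γ : ℝ → ℝ, w : ℤ → ℝ, and v : ℤ × ℤ → ℝ be such that for all i,j ∈ ℤ: γ(w(j)) − v(i,j) ≠ 0, β(w(j)) ≠ 0, and v(i,j+1) = α(w(j)) + β(w(j))/(γ(w(j)) − v(i,j)). Assume moreover that for all i,j the differences v(i+1,j) − v(i,j) and v(i+3,j) − v(i+2,j) are nonzero. Then the cross-ratio I(i,j) := ((v(i+3,j) − v(i+1,j))(v(i+2,j) − v(i,j))) / ((v(i+3,j) − v(i+2,j))(v(i+1,j) − v(i,j))) satisfies I(i,j+1) = I(i,j) for all i,j ∈ ℤ. -/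
lemma cr_helper (b g0 g1 g2 g3 d31 d20 d32 d10 : ℝ)
    (h0 : g0 ≠ 0) (h1 : g1 ≠ 0) (h2 : g2 ≠ 0) (h3 : g3 ≠ 0)
    (hb : b ≠ 0) (hd32 : d32 ≠ 0) (hd10 : d10 ≠ 0) :
    (b * d31 / (g3 * g1)) * (b * d20 / (g2 * g0)) /
      ((b * d32 / (g3 * g2)) * (b * d10 / (g1 * g0))) =
    d31 * d20 / (d32 * d10) := by
  field_simp

/-- the cross-ratio (gin) is an `i`-integral of equations of the
form (veq): if each column step `j → j+1` acts on the row values by the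
Möbius-type map `x ↦ α(w) + β(w)/(γ(w) − x)` with `w = w(j)` independent
of `i`, then the cross-ratio of four consecutive row values is unchanged under
the unit shift in `j`. -/
theorem cross_ratio_i_integral
    (α β γ : ℝ → ℝ) (w : ℤ → ℝ) (v : ℤ → ℤ → ℝ)
    (hden : ∀ i j : ℤ, γ (w j) - v i j ≠ 0)
    (hβ : ∀ i j : ℤ, β (w j) ≠ 0)
    (heq : ∀ i j : ℤ, v i (j+1) = α (w j) + β (w j) / (γ (w j) - v i j))
    (hd1 : ∀ i j : ℤ, v (i+1) j - v i j ≠ 0)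
    (hd2 : ∀ i j : ℤ, v (i+3) j - v (i+2) j ≠ 0) :
    ∀ i j : ℤ,
      ((v (i+3) (j+1) - v (i+1) (j+1)) * (v (i+2) (j+1) - v i (j+1))) /
          ((v (i+3) (j+1) - v (i+2) (j+1)) * (v (i+1) (j+1) - v i (j+1))) =
        ((v (i+3) j - v (i+1) j) * (v (i+2) j - v i j)) /
          ((v (i+3) j - v (i+2) j) * (v (i+1) j - v i j)) := by
  intro i j
  have key : ∀ a b : ℤ, v a (j+1) - v b (j+1) =
      β (w j) * (v a j - v b j) / ((γ (w j) - v a j) * (γ (w j) - v b j)) := by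
    intro a b
    rw [heq a j, heq b j]
    field_simp [hden a j, hden b j]
    ring
  rw [key (i+3) (i+1), key (i+2) i, key (i+3) (i+2), key (i+1) i]
  exact cr_helper _ _ _ _ _ _ _ _ _ (hden i j) (hden (i+1) j) (hden (i+2) j)
    (hden (i+3) j) (hβ i j) (hd2 i j) (hd1 i j)
end

section
/- (j-integral of equation (ggen), from Proposition 1.) Let A, B, C, D, δ ∈ ℝ with (δ, A, C) ≠ (0,0,0) and (δA, C − δB, D) ≠ (0,0,0). Let u, θ : ℤ × ℤ → ℝ be such that for all i,j ∈ ℤ: (i) P_2 θ(i,j)² + P_1 θ(i,j) + P_0 = 0, where P_2 = δu(i,j) + Au(i,j+1) + AC, P_1 = (C + δB)u(i,j) + (C − δB)u(i,j+1) + (BC − AD − δD)(A − δ) + C², P_0 = (BC − AD)u(i,j) − δD·u(i,j+1) + BC(C − δB) + D(δAB − AC + δ²B); (ii) Aθ(i,j) + u(i,j) + C − δB ≠ 0 and θ(i+1,j)·(Aθ(i,j) + u(i,j) + C − δB) = u(i,j)θ(i,j) + δD; (iii) θ(i+1,j) ≠ θ(i,j), θ(i+1,j+1) ≠ θ(i,j+1),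 and Aθ(i,j+1) + δθ(i,j) + C ≠ 0. Then the function J(i,j) := (θ(i,j+1)(θ(i,j) + B) + D) / (Aθ(i,j+1) + δθ(i,j) + C) satisfies J(i+1,j) = J(i,j) for all i,j ∈ ℤ. -/
/-- the function
`J = (θ_{0,1}(θ + B) + D)/(Aθ_{0,1} + δθ + C)` is a `j`-integral of equation
(ggen) from Proposition 1. -/
theorem ggen_j_integral
    (A B C D δ : ℝ)
    (h1 : ¬(δ = 0 ∧ A = 0 ∧ C = 0))
    (h2 : ¬(δ * A = 0 ∧ C - δ * B = 0 ∧ D = 0))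
    (u θ : ℤ → ℤ → ℝ)
    (hquad : ∀ i j : ℤ,
      (δ * u i j + A * u i (j+1) + A * C) * (θ i j) ^ 2 +
        ((C + δ * B) * u i j + (C - δ * B) * u i (j+1) +
          (B * C - A * D - δ * D) * (A - δ) + C ^ 2) * θ i j +
        ((B * C - A * D) * u i j - δ * D * u i (j+1) +
          B * C * (C - δ * B) + D * (δ * A * B - A * C + δ ^ 2 * B)) = 0)
    (hden : ∀ i j : ℤ, A * θ i j + u i j + C - δ * B ≠ 0)
    (hshift : ∀ i j : ℤ,
      θ (i+1) j * (A * θ i j + u i j + C - δ * B) = u i j * θ i j + δ * D)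
    (hθ : ∀ i j : ℤ, θ (i+1) j ≠ θ i j)
    (hθ' : ∀ i j : ℤ, θ (i+1) (j+1) ≠ θ i (j+1))
    (hJden : ∀ i j : ℤ, A * θ i (j+1) + δ * θ i j + C ≠ 0) :
    ∀ i j : ℤ,
      (θ (i+1) (j+1) * (θ (i+1) j + B) + D) /
          (A * θ (i+1) (j+1) + δ * θ (i+1) j + C) =
        (θ i (j+1) * (θ i j + B) + D) / (A * θ i (j+1) + δ * θ i j + C) := by
  intro i j
  have hd1 := hden i j
  have hd2 := hden i (j+1)
  have hcw : A * θ i j ^ 2 + (C - δ * B) * θ i j - δ * D ≠ 0 := by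
    intro h
    apply hθ i j
    have hz : (θ (i+1) j - θ i j) * (A * θ i j + u i j + C - δ * B) = 0 := by
      linear_combination hshift i j - h
    rcases mul_eq_zero.mp hz with h' | h'
    · exact sub_eq_zero.mp h'
    · exact absurd h' hd1
  rw [div_eq_div_iff (hJden (i+1) j) (hJden i j)]
  have key : ((θ (i+1) (j+1) * (θ (i+1) j + B) + D) *
        (A * θ i (j+1) + δ * θ i j + C) -
      (θ i (j+1) * (θ i j + B) + D) *
        (A * θ (i+1) (j+1) + δ * θ (i+1) j + C)) *
      ((A * θ i j + u i j + C - δ * B) *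
        (A * θ i (j+1) + u i (j+1) + C - δ * B) *
        (A * θ i j ^ 2 + (C - δ * B) * θ i j - δ * D)) = 0 := by
    linear_combination
      ((A * θ i j ^ 2 + (C - δ * B) * θ i j - δ * D) *
        ((u i (j+1) * θ i (j+1) + δ * D) * (A * θ i (j+1) + δ * θ i j + C) -
          (θ i (j+1) * (θ i j + B) + D) * δ *
            (A * θ i (j+1) + u i (j+1) + C - δ * B))) * hshift i j +
      ((A * θ i j ^ 2 + (C - δ * B) * θ i j - δ * D) *
        (A * θ i j + u i j + C - δ * B) *
        ((θ (i+1) j + B) * (A * θ i (j+1) + δ * θ i j + C) -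
          A * (θ i (j+1) * (θ i j + B) + D))) * hshift i (j+1) +
      (- D^2*δ^2 + C*D*δ*(θ i (j+1)) + C*D*δ*(θ i j) - C^2*(θ i j)*(θ i (j+1)) - B*D*δ^2*(θ i (j+1)) - B*D*δ^2*(θ i j) + 2*B*C*δ*(θ i j)*(θ i (j+1)) - B^2*δ^2*(θ i j)*(θ i (j+1)) + A*D*δ*(θ i (j+1))^2 + A*D*δ*(θ i j)^2 - A*C*(θ i j)*(θ i (j+1))^2 - A*C*(θ i j)^2*(θ i (j+1)) + A*B*δ*(θ i j)*(θ i (j+1))^2 + A*B*δ*(θ i j)^2*(θ i (j+1)) - A^2*(θ i j)^2*(θ i (j+1))^2) * hquad i j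
  have hne := mul_ne_zero (mul_ne_zero hd1 hd2) hcw
  have h0 := (mul_eq_zero.mp key).resolve_right hne
  linarith [sub_eq_zero.mp h0]
end
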